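/- Let a, c, e, f be real numbers and for t ∈ ℝ let A(t) = [[a,0,e],[0,a,f],[e,f,c+t]]. Let Γ(t) denote the discriminant of the characteristic polynomial of A(t). Then the coefficient of t² in Γ(t) equals (e² + f²)². Consequently, if Γ(t) = 0 for all t, then e = f = 0. -/

import Mathlib

/-- The discriminant of a monic cubic polynomial `λ³ + p λ² + q λ + r`,
expressed through its coefficients. -/
noncomputable def cubicDiscrim (P : Polynomial ℝ) : ℝ :=
  let p := P.coeff 2
  let q := P.coeff 1
  let r := P.coeff 0
  18 * p * q * r - 4 * p ^ 3 * r + p ^ 2 * q ^ 2 - 4 * q ^ 3 - 27 * r ^ 2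

open Polynomial in
theorem charpoly_aux (a c e f t : ℝ) :
    (!![a, 0, e; 0, a, f; e, f, c + t] : Matrix (Fin 3) (Fin 3) ℝ).charpoly
    = X^3 + C (-(2*a+c+t)) * X^2 + C (a^2+2*a*(c+t)-e^2-f^2) * X
      + C (-(a^2*(c+t)-a*e^2-a*f^2)) := by
  rw [Matrix.charpoly, Matrix.det_fin_three]
  simp [Matrix.charmatrix_apply, map_ofNat]
  ring

theorem discrim_aux (a c e f t : ℝ) (A : ℝ → Matrix (Fin 3) (Fin 3) ℝ)
    (hA : ∀ t, A t = !![a, 0, e; 0, a, f; e, f, c + t]) :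
    cubicDiscrim (A t).charpoly =
      (4*(e^2+f^2)^3 + (c-a)^2*(e^2+f^2)^2) + (2*(c-a)*(e^2+f^2)^2)*t
        + (e^2+f^2)^2*t^2 := by
  rw [hA, charpoly_aux]
  simp only [cubicDiscrim, Polynomial.coeff_add, Polynomial.coeff_C_mul,
    Polynomial.coeff_X_pow, Polynomial.coeff_X, Polynomial.coeff_C]
  norm_num
  ring

theorem discriminant_t2_coefficient
    (a c e f : ℝ)
    (A : ℝ → Matrix (Fin 3) (Fin 3) ℝ)
    (hA : ∀ t, A t = !![a, 0, e; 0, a, f; e, f, c + t])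
    (Γ : ℝ → ℝ) (hΓ : ∀ t, Γ t = cubicDiscrim (A t).charpoly) :
    (∃ coeffs : Fin 5 → ℝ, coeffs 2 = (e ^ 2 + f ^ 2) ^ 2 ∧
      ∀ t, Γ t = ∑ i : Fin 5, coeffs i * t ^ (i : ℕ)) ∧
    ((∀ t, Γ t = 0) → e = 0 ∧ f = 0) := by
  have key : ∀ t, Γ t =
      (4*(e^2+f^2)^3 + (c-a)^2*(e^2+f^2)^2) + (2*(c-a)*(e^2+f^2)^2)*t
        + (e^2+f^2)^2*t^2 := fun t => by rw [hΓ]; exact discrim_aux a c e f t A hA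
  constructor
  · refine ⟨![4*(e^2+f^2)^3 + (c-a)^2*(e^2+f^2)^2, 2*(c-a)*(e^2+f^2)^2,
      (e^2+f^2)^2, 0, 0], rfl, fun t => ?_⟩
    rw [key t]
    simp [Fin.sum_univ_five]
  · intro h0
    have h1 := (key 0).symm.trans (h0 0)
    have h2 := (key 1).symm.trans (h0 1)
    have h3 := (key (-1)).symm.trans (h0 (-1))
    have hc2 : (e^2+f^2)^2 = 0 := by linarith
    have hef : e^2 + f^2 = 0 := by nlinarith
    constructor <;> nlinarith [sq_nonneg e, sq_nonneg f]
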